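/- For all integers b ≥ 1 and even Δ ≥ 4b, there exists a graph with diameter 2, arboricity at most b, maximum degree Δ, and at least bΔ/4 vertices. -/

import Mathlib

/-- `G` has arboricity at most `b`: the edge set of `G` is the union of the edge
sets of `b` forests. -/
def ArboricityLE {V : Type*} (G : SimpleGraph V) (b : ℕ) : Prop :=
  ∃ F : Fin b → SimpleGraph V, (∀ i, (F i).IsAcyclic) ∧ (⨆ i, F i) = G

open SimpleGraph Finset

lemma acyclic_of_leafMap' {VV : Type*} (F : SimpleGraph VV) (S : Set VV) (p : VV → VV)
    (h1 : ∀ u v, F.Adj u v → (u ∈ S ∧ v = p u) ∨ (v ∈ S ∧ u = p v))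
    (h2 : ∀ v ∈ S, p v ∉ S) : F.IsAcyclic := by
  have key : ∀ v ∈ S, ∀ w, F.Adj v w → w = p v := by
    intro v hv w hadj
    rcases h1 v w hadj with ⟨_, h⟩ | ⟨hw, h⟩
    · exact h
    · exact absurd hv (h ▸ h2 w hw)
  rw [isAcyclic_iff_forall_adj_isBridge]
  have main : ∀ v ∈ S, F.Adj v (p v) → F.IsBridge s(v, p v) := by
    intro v hv hadj
    rw [isBridge_iff]
    refine ?_
    rintro ⟨w⟩
    have hne : v ≠ p v := F.ne_of_adj hadj
    have hnil : ¬ w.Nil := SimpleGraph.Walk.not_nil_of_ne hne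
    have hadj2 : (F.deleteEdges {s(v, p v)}).Adj v (w.getVert 1) := w.adj_snd hnil
    rw [deleteEdges_adj] at hadj2
    obtain ⟨hFadj, hne2⟩ := hadj2
    have : w.getVert 1 = p v := key v hv _ hFadj
    rw [this] at hne2
    exact hne2 (by simp [hne])
  intro u v hadj
  rcases h1 u v hadj with ⟨hu, rfl⟩ | ⟨hv, rfl⟩
  · exact main u hu hadj
  · have := main v hv hadj.symm
    rwa [Sym2.eq_swap] at this

namespace Grid
variable (l q z : ℕ)

section withNZ
variable [NeZero l]

/-- the balanced band function -/
def xb (i : Fin (l+1)) (j : ZMod l) : ℕ := if (j + (i.val : ZMod l)).val < z then 1 else 0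

def mu (p : Fin (l+1) × ZMod l) : ℕ := q + xb l z p.1 p.2

lemma mu_pos (hq : 1 ≤ q) (p : Fin (l+1) × ZMod l) : 0 < mu l q z p := by
  unfold mu; omega

lemma mu_le (p : Fin (l+1) × ZMod l) : mu l q z p ≤ q + 1 := by
  unfold mu xb; split <;> omega

/-- equivalence between `ZMod l` and `Fin l` -/
def EZ : ZMod l ≃ Fin l where
  toFun x := ⟨x.val, ZMod.val_lt x⟩
  invFun i := (i.val : ZMod l)
  left_inv x := by simp [ZMod.natCast_val, ZMod.cast_id]
  right_inv i := by ext; simp [ZMod.val_cast_of_lt i.isLt]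

lemma zcount (hz : z ≤ l) :
    ∑ j : ZMod l, (if j.val < z then 1 else 0) = z := by
  rw [Fintype.sum_equiv (EZ l) _ (fun i : Fin l => if i.val < z then 1 else 0)
    (fun x => by rfl)]
  rw [Fin.sum_univ_eq_sum_range (fun i => if i < z then 1 else 0) l]
  rw [Finset.sum_boole]
  norm_cast
  have : (Finset.range l).filter (fun j => j < z) = Finset.range z := by
    ext j
    simp only [Finset.mem_filter, Finset.mem_range]
    omega
  rw [this, Finset.card_range]

lemma shift_sum (f : ZMod l → ℕ) (r : ZMod l) : ∑ j : ZMod l, f (j + r) = ∑ j : ZMod l, f j :=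
  Fintype.sum_equiv (Equiv.addRight r) _ _ (fun x => rfl)

lemma row_sum (hz : z ≤ l) (i : Fin (l+1)) : ∑ j : ZMod l, xb l z i j = z := by
  unfold xb
  rw [shift_sum l (fun j => if j.val < z then 1 else 0) ((i.val : ZMod l))]
  exact zcount l z hz

lemma col_sum_le (hz : z ≤ l) (c : ZMod l) : ∑ i : Fin (l+1), xb l z i c ≤ z + 1 := by
  rw [Fin.sum_univ_castSucc]
  have h1 : ∑ i : Fin l, xb l z i.castSucc c = z := by
    unfold xb
    rw [Fintype.sum_equiv (EZ l).symm _ (fun x : ZMod l => if (c + x).val < z then 1 else 0)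
      (fun i => by simp [EZ, add_comm]; rfl)]
    have h3 : ∑ x : ZMod l, (if (c + x).val < z then 1 else 0) = ∑ x : ZMod l, (if x.val < z then 1 else 0) :=
      Fintype.sum_equiv (Equiv.addLeft c) _ _ (fun x => rfl)
    rw [h3, zcount l z hz]
  have h2 : xb l z (Fin.last l) c ≤ 1 := by unfold xb; split <;> omega
  omega


abbrev Pos := Fin (l+1) × ZMod l
abbrev V := Pos l ⊕ (Σ p : Pos l, Fin (mu l q z p))

def baseRel : V l q z → V l q z → Prop
  | .inl (a, _c), .inl (a', _c') => a = a'
  | .inr ⟨(i, j), _⟩, .inl (a, c) => i = a ∨ j = c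
  | _, _ => False

def G : SimpleGraph (V l q z) := fromRel (baseRel l q z)

lemma G_adj_hub_hub {a a' : Fin (l+1)} {c c' : ZMod l} :
    (G l q z).Adj (.inl (a,c)) (.inl (a',c')) ↔ a = a' ∧ c ≠ c' := by
  rw [G, fromRel_adj]
  constructor
  · rintro ⟨hne, h | h⟩
    · exact ⟨h, fun hc => hne (by rw [h, hc])⟩
    · exact ⟨h.symm, fun hc => hne (by rw [h, hc])⟩
  · rintro ⟨rfl, hc⟩
    exact ⟨by simp [hc], Or.inl rfl⟩

lemma G_adj_hub_page {a : Fin (l+1)} {c : ZMod l} {p : Pos l} {t : Fin (mu l q z p)} :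
    (G l q z).Adj (.inl (a,c)) (.inr ⟨p,t⟩) ↔ (p.1 = a ∨ p.2 = c) := by
  rw [G, fromRel_adj]
  obtain ⟨i, j⟩ := p
  constructor
  · rintro ⟨hne, h | h⟩
    · exact h.elim
    · exact h
  · intro h
    exact ⟨by simp, Or.inr h⟩

lemma G_adj_page_page {x y : Σ p : Pos l, Fin (mu l q z p)} :
    ¬ (G l q z).Adj (.inr x) (.inr y) := by
  rw [G, fromRel_adj]
  rintro ⟨hne, h | h⟩ <;> obtain ⟨⟨i,j⟩,t⟩ := x <;> obtain ⟨⟨i',j'⟩,t'⟩ := y <;> exact h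

lemma hwalk (hq : 1 ≤ q) (u v : V l q z) : ∃ w : (G l q z).Walk u v, w.length ≤ 2 := by
  by_cases huv : u = v
  · subst huv; exact ⟨Walk.nil, by simp⟩
  · match u, v with
    | .inl (a,c), .inl (a',c') =>
      by_cases ha : a = a'
      · have hc : c ≠ c' := fun h => huv (by rw [ha, h])
        exact ⟨Walk.cons ((G_adj_hub_hub l q z).2 ⟨ha, hc⟩) Walk.nil, by simp⟩
      · refine ⟨Walk.cons ((G_adj_hub_page l q z).2 (Or.inl rfl))
          (Walk.cons (((G_adj_hub_page l q z (a := a') (c := c')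
            (p := (a, c')) (t := ⟨0, mu_pos l q z hq _⟩)).2 (Or.inr rfl)).symm) Walk.nil), by simp⟩
    | .inl (a,c), .inr ⟨⟨i,j⟩,t⟩ =>
      by_cases h : i = a ∨ j = c
      · exact ⟨Walk.cons ((G_adj_hub_page l q z).2 h) Walk.nil, by simp⟩
      · push_neg at h
        refine ⟨Walk.cons ((G_adj_hub_hub l q z).2 ⟨rfl, fun hc => h.2 hc.symm⟩)
          (Walk.cons ((G_adj_hub_page l q z).2 (Or.inr rfl)) Walk.nil), by simp⟩
    | .inr ⟨⟨i,j⟩,t⟩, .inl (a,c) =>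
      by_cases h : i = a ∨ j = c
      · exact ⟨Walk.cons ((G_adj_hub_page l q z).2 h).symm Walk.nil, by simp⟩
      · push_neg at h
        refine ⟨Walk.cons (((G_adj_hub_page l q z (a := a) (c := j)
            (p := (i,j)) (t := t)).2 (Or.inr rfl)).symm)
          (Walk.cons ((G_adj_hub_hub l q z).2 ⟨rfl, h.2⟩) Walk.nil), by simp⟩
    | .inr ⟨⟨i,j⟩,t⟩, .inr ⟨⟨i',j'⟩,t'⟩ =>
      refine ⟨Walk.cons (((G_adj_hub_page l q z (a := i) (c := j')
          (p := (i,j)) (t := t)).2 (Or.inl rfl)).symm)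
        (Walk.cons ((G_adj_hub_page l q z).2 (Or.inr rfl)) Walk.nil), by simp⟩


def colRel (a : Fin (l+1)) : V l q z → V l q z → Prop
  | .inr ⟨(_i,j),_⟩, .inl (a', j') => a' = a ∧ j' = j
  | .inl (r, _y), .inl (r', cp) => r' = r ∧ r ≠ a ∧ a.val < l ∧ cp = ((a.val : ℕ) : ZMod l)
  | _, _ => False

def Fcol (a : Fin (l+1)) : SimpleGraph (V l q z) := fromRel (colRel l q z a)

def rowRel (c : ZMod l) : V l q z → V l q z → Prop
  | .inr ⟨(i,_j),_⟩, .inl (i', c') => i' = i ∧ c' = c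
  | _, _ => False

def Frow (c : ZMod l) : SimpleGraph (V l q z) := fromRel (rowRel l q z c)

lemma Fcol_acyclic (a : Fin (l+1)) : (Fcol l q z a).IsAcyclic := by
  apply acyclic_of_leafMap' _
    {v : V l q z | Sum.elim (fun h => h.1 ≠ a ∧ h.2 ≠ ((a.val : ℕ) : ZMod l)) (fun _ => True) v}
    (Sum.elim (fun h => Sum.inl (h.1, ((a.val : ℕ) : ZMod l))) (fun x => Sum.inl (a, x.1.2)))
  · intro u v hadj
    rw [Fcol, fromRel_adj] at hadj
    obtain ⟨hne, h | h⟩ := hadj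
    · match u, v with
      | .inr ⟨(i,j),t⟩, .inl (a', j') =>
        obtain ⟨rfl, rfl⟩ := h
        exact Or.inl ⟨trivial, rfl⟩
      | .inl (r, y), .inl (r', cp) =>
        obtain ⟨rfl, hra, hal, rfl⟩ := h
        exact Or.inl ⟨⟨hra, fun hy => hne (congrArg Sum.inl (Prod.ext rfl hy))⟩, rfl⟩
    · match u, v with
      | .inl (a', j'), .inr ⟨(i,j),t⟩ =>
        obtain ⟨rfl, rfl⟩ := h
        exact Or.inr ⟨trivial, rfl⟩
      | .inl (r', cp), .inl (r, y) =>
        obtain ⟨rfl, hra, hal, rfl⟩ := h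
        exact Or.inr ⟨⟨hra, fun hy => hne (congrArg Sum.inl (Prod.ext rfl hy.symm))⟩, rfl⟩
  · rintro (⟨r,y⟩ | x) hv
    · simp at hv ⊢
    · simp at hv ⊢

lemma Frow_acyclic (c : ZMod l) : (Frow l q z c).IsAcyclic := by
  apply acyclic_of_leafMap' _
    {v : V l q z | Sum.elim (fun _ => False) (fun _ => True) v}
    (Sum.elim Sum.inl (fun x => Sum.inl (x.1.1, c)))
  · intro u v hadj
    rw [Frow, fromRel_adj] at hadj
    obtain ⟨hne, h | h⟩ := hadj
    · match u, v with
      | .inr ⟨(i,j),t⟩, .inl (i', c') =>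
        obtain ⟨rfl, rfl⟩ := h
        exact Or.inl ⟨trivial, rfl⟩
    · match u, v with
      | .inl (i', c'), .inr ⟨(i,j),t⟩ =>
        obtain ⟨rfl, rfl⟩ := h
        exact Or.inr ⟨trivial, rfl⟩
  · rintro (⟨r,y⟩ | x) hv
    · simp at hv
    · simp at hv ⊢

lemma Fcol_le (a : Fin (l+1)) : Fcol l q z a ≤ G l q z := by
  intro u v hadj
  rw [Fcol, fromRel_adj] at hadj
  rw [G, fromRel_adj]
  obtain ⟨hne, h | h⟩ := hadj
  · refine ⟨hne, ?_⟩
    match u, v with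
    | .inr ⟨(i,j),t⟩, .inl (a', j') =>
      obtain ⟨rfl, rfl⟩ := h
      exact Or.inl (Or.inr rfl)
    | .inl (r, y), .inl (r', cp) =>
      exact Or.inl h.1.symm
  · refine ⟨hne, ?_⟩
    match u, v with
    | .inl (a', j'), .inr ⟨(i,j),t⟩ =>
      obtain ⟨rfl, rfl⟩ := h
      exact Or.inr (Or.inr rfl)
    | .inl (r', cp), .inl (r, y) =>
      exact Or.inr h.1.symm

lemma Frow_le (c : ZMod l) : Frow l q z c ≤ G l q z := by
  intro u v hadj
  rw [Frow, fromRel_adj] at hadj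
  rw [G, fromRel_adj]
  obtain ⟨hne, h | h⟩ := hadj
  · refine ⟨hne, ?_⟩
    match u, v with
    | .inr ⟨(i,j),t⟩, .inl (i', c') =>
      obtain ⟨rfl, rfl⟩ := h
      exact Or.inl (Or.inl rfl)
  · refine ⟨hne, ?_⟩
    match u, v with
    | .inl (i', c'), .inr ⟨(i,j),t⟩ =>
      obtain ⟨rfl, rfl⟩ := h
      exact Or.inr (Or.inl rfl)

def family (b : ℕ) : Fin b → SimpleGraph (V l q z) := fun i =>
  if h : i.val < l+1 then Fcol l q z ⟨i.val, h⟩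
  else if _h2 : i.val < 2*l+1 then Frow l q z (((i.val - (l+1) : ℕ)) : ZMod l)
  else ⊥

lemma family_acyclic (b : ℕ) (i : Fin b) : ((family l q z b) i).IsAcyclic := by
  unfold family
  split_ifs with h h2
  · exact Fcol_acyclic l q z _
  · exact Frow_acyclic l q z _
  · exact isAcyclic_bot

lemma family_sup (b : ℕ) (hb : 2*l+1 ≤ b) : (⨆ i, family l q z b i) = G l q z := by
  apply le_antisymm
  · apply iSup_le
    intro i
    unfold family
    split_ifs with h h2
    · exact Fcol_le l q z _
    · exact Frow_le l q z _
    · exact bot_le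
  · intro u v hadj
    rw [iSup_adj]
    match u, v with
    | .inl (a,c), .inl (a',c') =>
      obtain ⟨rfl, hcc⟩ := (G_adj_hub_hub l q z).1 hadj
      by_cases hac : a.val = c.val
      · -- use column c', child (a,c), parent (a,c')
        have hvne : a.val ≠ c'.val := fun h => hcc (by
          have : c.val = c'.val := by omega
          exact ZMod.val_injective l this)
        refine ⟨⟨c'.val, by have := ZMod.val_lt c'; omega⟩, ?_⟩
        unfold family
        rw [dif_pos (by have := ZMod.val_lt c'; simp; omega)]
        rw [Fcol, fromRel_adj]
        refine ⟨by simp [hcc], Or.inl ?_⟩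
        show _ ∧ _ ∧ _ ∧ _
        refine ⟨rfl, ?_, ?_, ?_⟩
        · intro hh
          exact hvne (by rw [hh])
        · exact ZMod.val_lt c'
        · simp [ZMod.natCast_val, ZMod.cast_id]
      · refine ⟨⟨c.val, by have := ZMod.val_lt c; omega⟩, ?_⟩
        unfold family
        rw [dif_pos (by have := ZMod.val_lt c; simp; omega)]
        rw [Fcol, fromRel_adj]
        refine ⟨by simp [hcc], Or.inr ?_⟩
        show _ ∧ _ ∧ _ ∧ _
        refine ⟨rfl, ?_, ?_, ?_⟩
        · intro hh
          exact hac (by rw [hh])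
        · exact ZMod.val_lt c
        · simp [ZMod.natCast_val, ZMod.cast_id]
    | .inl (a,c), .inr ⟨⟨i,j⟩,t⟩ =>
      have h := (G_adj_hub_page l q z).1 hadj
      by_cases hj : j = c
      · refine ⟨⟨a.val, by omega⟩, ?_⟩
        unfold family
        rw [dif_pos (by simpa using a.isLt)]
        rw [Fcol, fromRel_adj]
        exact ⟨by simp, Or.inr ⟨rfl, hj.symm⟩⟩
      · have hi : i = a := by tauto
        refine ⟨⟨l+1+c.val, by have := ZMod.val_lt c; omega⟩, ?_⟩
        unfold family
        rw [dif_neg (by simp; omega), dif_pos (by have := ZMod.val_lt c; simp; omega)]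
        rw [Frow, fromRel_adj]
        refine ⟨by simp, Or.inr ⟨hi.symm, ?_⟩⟩
        show c = _
        have : l + 1 + c.val - (l+1) = c.val := by omega
        rw [this]
        simp [ZMod.natCast_val, ZMod.cast_id]
    | .inr ⟨⟨i,j⟩,t⟩, .inl (a,c) =>
      have h := (G_adj_hub_page l q z).1 hadj.symm
      by_cases hj : j = c
      · refine ⟨⟨a.val, by omega⟩, ?_⟩
        unfold family
        rw [dif_pos (by simpa using a.isLt)]
        rw [Fcol, fromRel_adj]
        exact ⟨by simp, Or.inl ⟨rfl, hj.symm⟩⟩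
      · have hi : i = a := by tauto
        refine ⟨⟨l+1+c.val, by have := ZMod.val_lt c; omega⟩, ?_⟩
        unfold family
        rw [dif_neg (by simp; omega), dif_pos (by have := ZMod.val_lt c; simp; omega)]
        rw [Frow, fromRel_adj]
        refine ⟨by simp, Or.inl ⟨hi.symm, ?_⟩⟩
        show c = _
        have h2 : l + 1 + c.val - (l+1) = c.val := by omega
        rw [h2]
        simp [ZMod.natCast_val, ZMod.cast_id]
    | .inr x, .inr y => exact absurd hadj (G_adj_page_page l q z)

lemma hub_deg (hz : z ≤ l) (a : Fin (l+1)) (c : ZMod l) :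
    ((G l q z).neighborSet (Sum.inl (a,c))).ncard ≤ 2*(q*l+z) + l := by
  classical
  set S1 : Set (V l q z) := (fun y : ZMod l => (Sum.inl (a,y) : V l q z)) '' {y | y ≠ c} with hS1
  set S2 : Set (V l q z) :=
    (fun x : Σ j : ZMod l, Fin (mu l q z (a,j)) => (Sum.inr ⟨(a,x.1),x.2⟩ : V l q z)) '' Set.univ with hS2
  set S3 : Set (V l q z) :=
    (fun x : Σ i : {i : Fin (l+1) // i ≠ a}, Fin (mu l q z (i.1, c)) =>
      (Sum.inr ⟨(x.1.1, c), x.2⟩ : V l q z)) '' Set.univ with hS3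
  have hsub : (G l q z).neighborSet (Sum.inl (a,c)) ⊆ S1 ∪ (S2 ∪ S3) := by
    rintro (⟨a',c'⟩ | ⟨⟨i,j⟩,t⟩) hv
    · obtain ⟨rfl, hcc⟩ := (G_adj_hub_hub l q z).1 hv
      exact Or.inl ⟨c', fun h => hcc h.symm, rfl⟩
    · have h := (G_adj_hub_page l q z).1 hv
      by_cases hi : i = a
      · subst hi
        exact Or.inr (Or.inl ⟨⟨j, t⟩, trivial, rfl⟩)
      · have hj : j = c := by tauto
        subst hj
        exact Or.inr (Or.inr ⟨⟨⟨i, hi⟩, t⟩, trivial, rfl⟩)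
  have hinj1 : Function.Injective (fun y : ZMod l => (Sum.inl (a,y) : V l q z)) := by
    intro x y h; simpa using h
  have hinj2 : Function.Injective
      (fun x : Σ j : ZMod l, Fin (mu l q z (a,j)) => (Sum.inr ⟨(a,x.1),x.2⟩ : V l q z)) := by
    rintro ⟨j,t⟩ ⟨j',t'⟩ h
    have h' : (⟨(a,j),t⟩ : Σ p : Pos l, Fin (mu l q z p)) = ⟨(a,j'),t'⟩ := Sum.inr.inj h
    obtain ⟨h1, h2⟩ := Sigma.ext_iff.mp h'
    obtain rfl : j = j' := (Prod.ext_iff.mp h1).2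
    exact congrArg (Sigma.mk j) (eq_of_heq h2)
  have hinj3 : Function.Injective
      (fun x : Σ i : {i : Fin (l+1) // i ≠ a}, Fin (mu l q z (i.1, c)) =>
        (Sum.inr ⟨(x.1.1, c), x.2⟩ : V l q z)) := by
    rintro ⟨⟨i,hi⟩,t⟩ ⟨⟨i',hi'⟩,t'⟩ h
    have h' : (⟨(i,c),t⟩ : Σ p : Pos l, Fin (mu l q z p)) = ⟨(i',c),t'⟩ := Sum.inr.inj h
    obtain ⟨h1, h2⟩ := Sigma.ext_iff.mp h'
    obtain rfl : i = i' := (Prod.ext_iff.mp h1).1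
    have ht : t = t' := eq_of_heq h2
    subst ht
    rfl
  have hc1 : S1.ncard = l - 1 := by
    rw [hS1, Set.ncard_image_of_injective _ hinj1]
    have he : {y : ZMod l | y ≠ c} = Set.univ \ {c} := by ext; simp
    rw [he, Set.ncard_diff_singleton_of_mem (Set.mem_univ c), Set.ncard_univ,
      Nat.card_eq_fintype_card, ZMod.card]
  have hrow : ∑ j : ZMod l, mu l q z (a, j) = q*l + z := by
    unfold mu
    rw [Finset.sum_add_distrib, Finset.sum_const, Finset.card_univ, ZMod.card,
      row_sum l z hz a, smul_eq_mul, mul_comm]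
  have hc2 : S2.ncard = q*l + z := by
    rw [hS2, Set.ncard_image_of_injective _ hinj2, Set.ncard_univ, Nat.card_eq_fintype_card,
      Fintype.card_sigma]
    simpa using hrow
  have hc3 : S3.ncard ≤ q*l + z + 1 := by
    rw [hS3, Set.ncard_image_of_injective _ hinj3, Set.ncard_univ, Nat.card_eq_fintype_card,
      Fintype.card_sigma]
    have he : ∑ i : {i : Fin (l+1) // i ≠ a}, Fintype.card (Fin (mu l q z (i.1, c)))
        = ∑ i ∈ Finset.univ.erase a, mu l q z (i, c) := by
      simp only [Fintype.card_fin]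
      exact (Finset.sum_subtype (p := fun i => i ≠ a) (Finset.univ.erase a)
        (fun x => by simp) (fun i => mu l q z (i, c))).symm
    rw [he]
    have hcol : ∑ i ∈ Finset.univ.erase a, mu l q z (i, c)
        ≤ (∑ i ∈ Finset.univ.erase a, q) + ∑ i : Fin (l+1), xb l z i c := by
      unfold mu
      rw [Finset.sum_add_distrib]
      gcongr
      exact Finset.erase_subset _ _
    have : ∑ i ∈ (Finset.univ : Finset (Fin (l+1))).erase a, q = l * q := by
      rw [Finset.sum_const, Finset.card_erase_of_mem (Finset.mem_univ a)]
      simp [mul_comm]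
    rw [this] at hcol
    have h4 := col_sum_le l z hz c
    have h5 : l * q = q * l := Nat.mul_comm _ _
    omega
  calc ((G l q z).neighborSet (Sum.inl (a,c))).ncard
      ≤ (S1 ∪ (S2 ∪ S3)).ncard := Set.ncard_le_ncard hsub
    _ ≤ S1.ncard + (S2 ∪ S3).ncard := Set.ncard_union_le _ _
    _ ≤ S1.ncard + (S2.ncard + S3.ncard) :=
        Nat.add_le_add_left (Set.ncard_union_le S2 S3) _
    _ ≤ 2*(q*l+z) + l := by
        rw [hc1, hc2]
        have hl : 1 ≤ l := Nat.pos_of_ne_zero (NeZero.ne l)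
        have h9 : l - 1 + 1 = l := by omega
        linarith [hc3]

lemma page_deg (p : Pos l) (t : Fin (mu l q z p)) :
    ((G l q z).neighborSet (Sum.inr ⟨p, t⟩)).ncard ≤ 2*l + 1 := by
  classical
  obtain ⟨i, j⟩ := p
  set T1 : Set (V l q z) := (fun y : ZMod l => (Sum.inl (i,y) : V l q z)) '' Set.univ with hT1
  set T2 : Set (V l q z) := (fun x : Fin (l+1) => (Sum.inl (x,j) : V l q z)) '' Set.univ with hT2
  have hsub : (G l q z).neighborSet (Sum.inr ⟨(i,j), t⟩) ⊆ T1 ∪ T2 := by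
    rintro (⟨a,c⟩ | x) hv
    · have h := ((G_adj_hub_page l q z).1 ((G l q z).adj_symm hv) : i = a ∨ j = c)
      rcases h with rfl | rfl
      · exact Or.inl ⟨c, trivial, rfl⟩
      · exact Or.inr ⟨a, trivial, rfl⟩
    · exact absurd ((G l q z).adj_symm hv) (G_adj_page_page l q z)
  have hinj1 : Function.Injective (fun y : ZMod l => (Sum.inl (i,y) : V l q z)) := by
    intro x y h; simpa using h
  have hinj2 : Function.Injective (fun x : Fin (l+1) => (Sum.inl (x,j) : V l q z)) := by
    intro x y h; simpa using h
  have hc1 : T1.ncard = l := by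
    rw [hT1, Set.ncard_image_of_injective _ hinj1, Set.ncard_univ, Nat.card_eq_fintype_card,
      ZMod.card]
  have hc2 : T2.ncard = l + 1 := by
    rw [hT2, Set.ncard_image_of_injective _ hinj2, Set.ncard_univ, Nat.card_eq_fintype_card,
      Fintype.card_fin]
  calc ((G l q z).neighborSet (Sum.inr ⟨(i,j), t⟩)).ncard
      ≤ (T1 ∪ T2).ncard := Set.ncard_le_ncard hsub
    _ ≤ T1.ncard + T2.ncard := Set.ncard_union_le _ _
    _ ≤ 2*l + 1 := by omega

lemma card_V (hz : z ≤ l) : Fintype.card (V l q z) = (l+1) * (l + (l*q + z)) := by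
  classical
  rw [Fintype.card_sum, Fintype.card_sigma, Fintype.card_prod, Fintype.card_fin, ZMod.card]
  have : ∑ p : Pos l, Fintype.card (Fin (mu l q z p)) = ∑ p : Pos l, mu l q z p := by simp
  rw [this]
  rw [Fintype.sum_prod_type]
  have hrow : ∀ i : Fin (l+1), ∑ j : ZMod l, mu l q z (i, j) = q*l + z := by
    intro i
    unfold mu
    rw [Finset.sum_add_distrib, Finset.sum_const, Finset.card_univ, ZMod.card,
      row_sum l z hz i, smul_eq_mul, mul_comm]
  rw [Finset.sum_congr rfl (fun i _ => hrow i), Finset.sum_const, Finset.card_univ,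
    Fintype.card_fin, smul_eq_mul]
  ring

end withNZ
end Grid

lemma star_case (b Δ : ℕ) (hb : 1 ≤ b) (hb4 : b ≤ 4) (hΔ4 : 4 * b ≤ Δ) :
    ∃ (n : ℕ) (G : SimpleGraph (Fin n)),
      G.Connected ∧
      (∀ u v, G.dist u v ≤ 2) ∧
      ArboricityLE G b ∧
      (∀ v, (G.neighborSet v).ncard ≤ Δ) ∧
      (b * Δ : ℚ) / 4 ≤ n := by
  have hΔ : 4 ≤ Δ := le_trans (by omega) hΔ4
  set G : SimpleGraph (Fin (Δ+1)) := fromRel (fun u v => u = 0) with hG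
  have hadj0 : ∀ v : Fin (Δ+1), v ≠ 0 → G.Adj v 0 := fun v hv => by
    rw [hG, fromRel_adj]; exact ⟨hv, Or.inr rfl⟩
  have hreach : ∀ v, G.Reachable v 0 := by
    intro v
    by_cases h : v = 0
    · rw [h]
    · exact (hadj0 v h).reachable
  refine ⟨Δ + 1, G, ?_, ?_, ?_, ?_, ?_⟩
  · exact ⟨fun u v => (hreach u).trans (hreach v).symm⟩
  · intro u v
    by_cases huv : u = v
    · rw [huv, SimpleGraph.dist_self]; omega
    · by_cases hu : u = 0
      · have : G.Adj u v := by rw [hG, fromRel_adj]; exact ⟨huv, Or.inl hu⟩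
        calc G.dist u v ≤ (Walk.cons this Walk.nil).length := dist_le _
          _ ≤ 2 := by simp
      · by_cases hv : v = 0
        · have : G.Adj u v := hv ▸ hadj0 u hu
          calc G.dist u v ≤ (Walk.cons this Walk.nil).length := dist_le _
            _ ≤ 2 := by simp
        · calc G.dist u v ≤ (Walk.cons (hadj0 u hu) (Walk.cons ((hadj0 v hv).symm) Walk.nil)).length := dist_le _
            _ ≤ 2 := by simp
  · refine ⟨fun i => if i = ⟨0, hb⟩ then G else ⊥, ?_, ?_⟩
    · intro i
      dsimp only
      by_cases h : i = ⟨0, hb⟩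
      · rw [if_pos h]
        apply acyclic_of_leafMap' G {v | v ≠ 0} (fun _ => 0)
        · intro u v hadj
          rw [hG, fromRel_adj] at hadj
          obtain ⟨hne, h0 | h0⟩ := hadj
          · exact Or.inr ⟨fun hv => hne (h0.trans hv.symm), h0⟩
          · exact Or.inl ⟨fun hu => hne (hu.trans h0.symm), h0⟩
        · intro v _ hmem
          exact hmem rfl
      · rw [if_neg h]; exact isAcyclic_bot
    · apply le_antisymm
      · apply iSup_le
        intro i
        dsimp only
        by_cases h : i = ⟨0, hb⟩
        · rw [if_pos h]
        · rw [if_neg h]; exact bot_le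
      · have := le_iSup (fun i => if i = (⟨0, hb⟩ : Fin b) then G else ⊥) ⟨0, hb⟩
        simpa using this
  · intro v
    have hsub : G.neighborSet v ⊆ Set.univ \ {v} := by
      intro w hw
      exact ⟨trivial, fun h => G.ne_of_adj hw (by simpa using h.symm)⟩
    calc (G.neighborSet v).ncard ≤ (Set.univ \ {v}).ncard := Set.ncard_le_ncard hsub
      _ = (Set.univ : Set (Fin (Δ+1))).ncard - 1 := Set.ncard_diff_singleton_of_mem trivial
      _ ≤ Δ := by rw [Set.ncard_univ]; simp
  · have hc : (b:ℚ) ≤ 4 := by exact_mod_cast hb4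
    have h2 : (0:ℚ) ≤ Δ := by positivity
    rw [div_le_iff₀ (by norm_num)]
    push_cast
    nlinarith


lemma transfer {V : Type*} [Fintype V] [Nonempty V] (G : SimpleGraph V) (b Δ : ℕ)
    (hw : ∀ u v : V, ∃ w : G.Walk u v, w.length ≤ 2)
    (harb : ArboricityLE G b)
    (hdeg : ∀ v, (G.neighborSet v).ncard ≤ Δ)
    (hn : (b * Δ : ℚ) / 4 ≤ Fintype.card V) :
    ∃ (n : ℕ) (G' : SimpleGraph (Fin n)), G'.Connected ∧ (∀ u v, G'.dist u v ≤ 2) ∧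
      ArboricityLE G' b ∧ (∀ v, (G'.neighborSet v).ncard ≤ Δ) ∧ (b * Δ : ℚ) / 4 ≤ n := by
  classical
  set n := Fintype.card V with hcard
  set e : Fin n ≃ V := (Fintype.equivFin V).symm with he
  set G' : SimpleGraph (Fin n) := SimpleGraph.comap e G with hG'
  have hadj' : ∀ x y, G'.Adj x y ↔ G.Adj (e x) (e y) := fun x y => Iff.rfl
  haveI : Nonempty (Fin n) := Fin.pos_iff_nonempty.mp Fintype.card_pos
  let ψ : G →g G' := ⟨e.symm, fun {a b'} h => by
    rw [hadj']
    simpa using h⟩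
  have hψ : ∀ v, ψ v = e.symm v := fun _ => rfl
  have hw' : ∀ x y : Fin n, ∃ w' : G'.Walk x y, w'.length ≤ 2 := by
    intro x y
    obtain ⟨w, hwl⟩ := hw (e x) (e y)
    refine ⟨(w.map ψ).copy (by simp [hψ]) (by simp [hψ]), ?_⟩
    rw [Walk.length_copy, Walk.length_map]
    exact hwl
  refine ⟨n, G', ⟨fun x y => ⟨(hw' x y).choose⟩⟩, ?_, ?_, ?_, hn⟩
  · intro x y
    obtain ⟨w', hwl'⟩ := hw' x y
    exact le_trans (SimpleGraph.dist_le w') hwl'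
  · obtain ⟨F, hac, hsup⟩ := harb
    refine ⟨fun i => SimpleGraph.comap e (F i), ?_, ?_⟩
    · intro i v c hc
      let φ : SimpleGraph.comap (⇑e) (F i) →g F i := ⟨e, fun {a b'} h => h⟩
      exact hac i (c.map φ) (hc.map (f := φ) (fun x y h => e.injective h))
    · ext x y
      rw [iSup_adj, hadj', ← hsup, iSup_adj]
      constructor
      · rintro ⟨i, hi⟩
        exact ⟨i, hi⟩
      · rintro ⟨i, hi⟩
        exact ⟨i, hi⟩
  · intro x
    have hNS : G'.neighborSet x = ⇑e.symm '' (G.neighborSet (e x)) := by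
      ext y
      constructor
      · intro h
        exact ⟨e y, h, by simp⟩
      · rintro ⟨w, hw2, rfl⟩
        show G.Adj (e x) (e (e.symm w))
        simpa using hw2
    rw [hNS, Set.ncard_image_of_injective _ e.symm.injective]
    exact hdeg (e x)

/-- For all integers `b ≥ 1` and even `Δ ≥ 4b`, there exists a graph with
diameter at most `2`, arboricity at most `b`, maximum degree at most `Δ`, and at
least `bΔ/4` vertices. -/
theorem arboricity_diameter_two_lower_bound (b Δ : ℕ) (hb : 1 ≤ b) (hΔe : Even Δ)
    (hΔ : 4 * b ≤ Δ) :
    ∃ (n : ℕ) (G : SimpleGraph (Fin n)),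
      G.Connected ∧
      (∀ u v, G.dist u v ≤ 2) ∧
      ArboricityLE G b ∧
      (∀ v, (G.neighborSet v).ncard ≤ Δ) ∧
      (b * Δ : ℚ) / 4 ≤ n := by
  by_cases hb4 : b ≤ 4
  · exact star_case b Δ hb hb4 hΔ
  · push_neg at hb4
    set l := (b-1)/2 with hl
    have hl2 : 2 ≤ l := by omega
    have hbl : 2*l+1 ≤ b ∧ b ≤ 2*l+2 := by omega
    haveI : NeZero l := ⟨by omega⟩
    set W := (Δ - l)/2 with hWdef
    have hlΔ : l + 1 ≤ Δ := by omega
    have hWb : 2*W + l ≤ Δ ∧ Δ ≤ 2*W + l + 1 := by omega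
    set q := W / l with hqdef
    set z := W % l with hzdef
    have hqz : l * q + z = W := Nat.div_add_mod W l
    have hzl : z < l := Nat.mod_lt _ (by omega)
    have hq1 : 1 ≤ q := by
      have hlW : l ≤ W := by omega
      exact (Nat.one_le_div_iff (by omega)).mpr hlW
    haveI : Nonempty (Grid.V l q z) := ⟨Sum.inl (0, 0)⟩
    apply transfer (Grid.G l q z) b Δ
    · exact Grid.hwalk l q z hq1
    · exact ⟨Grid.family l q z b, Grid.family_acyclic l q z b,
        Grid.family_sup l q z b (by omega)⟩
    · rintro (⟨a,c⟩ | ⟨p,t⟩)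
      · refine le_trans (Grid.hub_deg l q z (le_of_lt hzl) a c) ?_
        have hcm : q*l = l*q := Nat.mul_comm _ _
        linarith [hWb.1, hqz]
      · exact le_trans (Grid.page_deg l q z p t) (by omega)
    · rw [Grid.card_V l q z (le_of_lt hzl)]
      have hnat : b * Δ ≤ ((l+1)*(l+(l*q+z)))*4 := by
        have h1 : b*Δ ≤ (2*l+2)*Δ := Nat.mul_le_mul_right Δ (by omega)
        have h2 : (2*l+2)*Δ ≤ (2*l+2)*(2*(l*q+z)+2*l) :=
          Nat.mul_le_mul_left _ (by linarith [hWb.2, hqz])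
        have h3 : (2*l+2)*(2*(l*q+z)+2*l) = ((l+1)*(l+(l*q+z)))*4 := by ring
        linarith
      rw [div_le_iff₀ (by norm_num)]
      exact_mod_cast hnat
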